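/- Let n, k, t be integers with 0 < t < k ≤ n, and suppose n > (k−t)·C(k², t+1) + t. Let ℱ be a t-intersecting, k-uniform family of subsets of [n] with |ℱ| = C(n−t, k−t). Then there exists T ⊆ [n] with |T| = t such that T ⊆ F for every F ∈ ℱ. -/

import Mathlib

open Finset

/-- Auxiliary arithmetic inequality: `k·C(k,t) ≤ C(k², t+1)` for `0 < t < k`. -/
lemma aux_choose_ineq (k t : ℕ) (ht : 0 < t) (htk : t < k) :
    k * k.choose t ≤ (k ^ 2).choose (t + 1) := by
  have hfac : 0 < Nat.factorial (t + 1) := Nat.factorial_pos _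
  refine Nat.le_of_mul_le_mul_left ?_ hfac
  have h1 : Nat.factorial (t + 1) * (k * k.choose t) = (t + 1) * (k * (Nat.factorial t * k.choose t)) := by
    rw [Nat.factorial_succ]; ring
  have h2 : Nat.factorial t * k.choose t = k.descFactorial t :=
    (Nat.descFactorial_eq_factorial_mul_choose k t).symm
  have h3 : k.descFactorial t ≤ k ^ t := Nat.descFactorial_le_pow k t
  have hmid : (t + 1) * (k * k ^ t) ≤ (k ^ 2 - t) ^ (t + 1) := by
    have hk2 : 2 ≤ k := by omega
    rcases Nat.eq_or_lt_of_le hk2 with hk | hk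
    · -- k = 2, t = 1
      have hkk : k = 2 := hk.symm
      have htt : t = 1 := by omega
      subst hkk; subst htt; norm_num
    · -- k ≥ 3
      have h4 : k * (k - 1) ≤ k ^ 2 - t := by
        have hsq : k ^ 2 = k * (k - 1) + k := by
          cases k with
          | zero => simp
          | succ m =>
            have : (m + 1) ^ 2 = (m + 1) * m + (m + 1) := by ring
            simpa using this
        omega
      calc (t + 1) * (k * k ^ t) ≤ 2 ^ (t + 1) * k ^ (t + 1) := by
            have : t + 1 < 2 ^ (t + 1) := Nat.lt_two_pow_self
            have hkk : k * k ^ t = k ^ (t + 1) := by ring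
            rw [hkk]
            exact Nat.mul_le_mul (le_of_lt this) le_rfl
        _ ≤ (k - 1) ^ (t + 1) * k ^ (t + 1) := by
            apply Nat.mul_le_mul_right
            exact Nat.pow_le_pow_left (by omega) _
        _ = (k * (k - 1)) ^ (t + 1) := by rw [← Nat.mul_pow]; ring_nf
        _ ≤ (k ^ 2 - t) ^ (t + 1) := Nat.pow_le_pow_left h4 _
  have h5 : (k ^ 2 - t) ^ (t + 1) ≤ (k ^ 2).descFactorial (t + 1) := by
    have : k ^ 2 + 1 - (t + 1) = k ^ 2 - t := by omega
    calc (k ^ 2 - t) ^ (t + 1) = (k ^ 2 + 1 - (t + 1)) ^ (t + 1) := by rw [this]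
      _ ≤ (k ^ 2).descFactorial (t + 1) := Nat.pow_sub_le_descFactorial _ _
  calc Nat.factorial (t + 1) * (k * k.choose t) = (t + 1) * (k * (Nat.factorial t * k.choose t)) := h1
    _ ≤ (t + 1) * (k * k ^ t) := by
        rw [h2]
        exact Nat.mul_le_mul le_rfl (Nat.mul_le_mul le_rfl h3)
    _ ≤ (k ^ 2).descFactorial (t + 1) := le_trans hmid h5
    _ = Nat.factorial (t + 1) * (k ^ 2).choose (t + 1) :=
        Nat.descFactorial_eq_factorial_mul_choose _ _

/-- The number of `k`-sets (in `Fin n`) containing a fixed set `S` is at most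
`C(n - |S|, k - |S|)`. -/
lemma count_supersets {n k : ℕ} (S : Finset (Fin n)) (𝒢 : Finset (Finset (Fin n)))
    (h : ∀ F ∈ 𝒢, F.card = k ∧ S ⊆ F) :
    𝒢.card ≤ (n - S.card).choose (k - S.card) := by
  classical
  have key : 𝒢.card ≤ (Sᶜ.powersetCard (k - S.card)).card := by
    apply card_le_card_of_injOn (fun F => F \ S)
    · intro F hF
      obtain ⟨hk, hS⟩ := h F hF
      simp only [mem_coe]
      rw [mem_powersetCard]
      refine ⟨fun x hx => ?_, ?_⟩
      · rw [mem_sdiff] at hx; simpa using hx.2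
      · rw [card_sdiff_of_subset hS, hk]
    · intro a ha b hb hab
      have h1 := (h a ha).2
      have h2 := (h b hb).2
      have hab' : a \ S = b \ S := hab
      have : a \ S ∪ S = b \ S ∪ S := by rw [hab']
      rwa [sdiff_union_of_subset h1, sdiff_union_of_subset h2] at this
  rwa [card_powersetCard, card_compl, Fintype.card_fin] at key

/-- EKR extremal families: if 0 < t < k ≤ n, n > (k-t)·C(k², t+1) + t, and ℱ is
a t-intersecting k-uniform family of subsets of [n] with |ℱ| = C(n-t, k-t), then
some t-element set T is contained in every member of ℱ. -/
theorem stmt_11 (n k t : ℕ) (ht : 0 < t) (htk : t < k) (hkn : k ≤ n)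
    (hn : (k - t) * (k ^ 2).choose (t + 1) + t < n)
    (ℱ : Finset (Finset (Fin n)))
    (huniform : ∀ F ∈ ℱ, F.card = k)
    (hinter : ∀ E ∈ ℱ, ∀ F ∈ ℱ, t ≤ (E ∩ F).card)
    (hcard : ℱ.card = (n - t).choose (k - t)) :
    ∃ T : Finset (Fin n), T.card = t ∧ ∀ F ∈ ℱ, T ⊆ F := by
  classical
  by_contra hcon
  push_neg at hcon
  -- ℱ is nonempty
  have hne : ℱ.Nonempty := by
    rw [← card_pos, hcard]
    exact Nat.choose_pos (by omega)
  obtain ⟨A, hA⟩ := hne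
  have hAcard : A.card = k := huniform A hA
  -- every F ∈ ℱ contains some t-subset of A
  have hcover : ℱ ⊆ (A.powersetCard t).biUnion
      (fun T => ℱ.filter (fun F => T ⊆ F)) := by
    intro F hF
    have h1 : t ≤ (F ∩ A).card := hinter F hF A hA
    obtain ⟨T, hT1, hT2⟩ := exists_subset_card_eq h1
    rw [mem_biUnion]
    refine ⟨T, ?_, ?_⟩
    · rw [mem_powersetCard]
      exact ⟨hT1.trans inter_subset_right, hT2⟩
    · rw [mem_filter]
      exact ⟨hF, hT1.trans inter_subset_left⟩
  -- bound on each piece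
  have hbound : ∀ T ∈ A.powersetCard t,
      (ℱ.filter (fun F => T ⊆ F)).card ≤ k * (n - (t+1)).choose (k - (t+1)) := by
    intro T hT
    rw [mem_powersetCard] at hT
    obtain ⟨hTA, hTcard⟩ := hT
    obtain ⟨G, hG, hTG⟩ := hcon T hTcard
    have hGcard : G.card = k := huniform G hG
    -- second cover: every F ⊇ T in ℱ contains a point of G \ T
    have hcov2 : ℱ.filter (fun F => T ⊆ F) ⊆ (G \ T).biUnion
        (fun x => ℱ.filter (fun F => insert x T ⊆ F)) := by
      intro F hF
      rw [mem_filter] at hF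
      obtain ⟨hFℱ, hTF⟩ := hF
      have h1 : t ≤ (F ∩ G).card := hinter F hFℱ G hG
      have h2 : (T ∩ G).card < t := by
        have hss : T ∩ G ⊂ T := by
          refine ⟨inter_subset_left, fun hsub => hTG fun x hx => ?_⟩
          exact mem_of_mem_inter_right (hsub hx)
        have := card_lt_card hss
        omega
      -- F ∩ G ⊄ T
      have h3 : ¬ (F ∩ G ⊆ T) := by
        intro hsub
        have : F ∩ G ⊆ T ∩ G := fun x hx => mem_inter.2 ⟨hsub hx, (mem_inter.1 hx).2⟩
        have := card_le_card this
        omega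
      obtain ⟨x, hx1, hx2⟩ := not_subset.1 h3
      rw [mem_biUnion]
      refine ⟨x, ?_, ?_⟩
      · rw [mem_sdiff]
        exact ⟨(mem_inter.1 hx1).2, hx2⟩
      · rw [mem_filter]
        refine ⟨hFℱ, insert_subset (mem_inter.1 hx1).1 hTF⟩
    have hstep : ∀ x ∈ G \ T,
        (ℱ.filter (fun F => insert x T ⊆ F)).card ≤ (n - (t+1)).choose (k - (t+1)) := by
      intro x hx
      rw [mem_sdiff] at hx
      have hicard : (insert x T).card = t + 1 := by
        rw [card_insert_of_notMem hx.2, hTcard]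
      have := count_supersets (n := n) (k := k) (insert x T)
        (ℱ.filter (fun F => insert x T ⊆ F)) (fun F hF => by
          rw [mem_filter] at hF
          exact ⟨huniform F hF.1, hF.2⟩)
      rwa [hicard] at this
    calc (ℱ.filter (fun F => T ⊆ F)).card
        ≤ ((G \ T).biUnion (fun x => ℱ.filter (fun F => insert x T ⊆ F))).card :=
          card_le_card hcov2
      _ ≤ ∑ x ∈ G \ T, (ℱ.filter (fun F => insert x T ⊆ F)).card := card_biUnion_le
      _ ≤ ∑ x ∈ G \ T, (n - (t+1)).choose (k - (t+1)) := Finset.sum_le_sum hstep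
      _ = (G \ T).card * (n - (t+1)).choose (k - (t+1)) := by rw [Finset.sum_const, smul_eq_mul]
      _ ≤ k * (n - (t+1)).choose (k - (t+1)) := by
          apply Nat.mul_le_mul_right
          calc (G \ T).card ≤ G.card := card_le_card (sdiff_subset)
            _ = k := hGcard
  -- total bound
  have htotal : ℱ.card ≤ k.choose t * (k * (n - (t+1)).choose (k - (t+1))) := by
    calc ℱ.card ≤ ((A.powersetCard t).biUnion (fun T => ℱ.filter (fun F => T ⊆ F))).card :=
          card_le_card hcover
      _ ≤ ∑ T ∈ A.powersetCard t, (ℱ.filter (fun F => T ⊆ F)).card := card_biUnion_le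
      _ ≤ ∑ T ∈ A.powersetCard t, k * (n - (t+1)).choose (k - (t+1)) :=
          Finset.sum_le_sum hbound
      _ = (A.powersetCard t).card * (k * (n - (t+1)).choose (k - (t+1))) := by
          rw [Finset.sum_const, smul_eq_mul]
      _ = k.choose t * (k * (n - (t+1)).choose (k - (t+1))) := by
          rw [card_powersetCard, hAcard]
  -- arithmetic contradiction
  set a := n - t with ha
  set b := k - t with hb
  have ha1 : 1 ≤ a := by omega
  have hb1 : 1 ≤ b := by omega
  have hab : b ≤ a := by omega
  have hid : a * (a - 1).choose (b - 1) = a.choose b * b := by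
    have := Nat.add_one_mul_choose_eq (a - 1) (b - 1)
    have e1 : a - 1 + 1 = a := by omega
    have e2 : b - 1 + 1 = b := by omega
    rwa [e1, e2] at this
    -- careful: succ_mul_choose_eq : succ n * choose n k = choose (succ n) (succ k) * succ k
  have hpos : 0 < (a - 1).choose (b - 1) := Nat.choose_pos (by omega)
  have hsub1 : n - (t+1) = a - 1 := by omega
  have hsub2 : k - (t+1) = b - 1 := by omega
  rw [hcard, hsub1, hsub2] at htotal
  -- a.choose b ≤ C(k,t) * k * C(a-1, b-1)
  have hmul : a * (a - 1).choose (b - 1) ≤ b * (k.choose t * k) * (a - 1).choose (b - 1) := by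
    calc a * (a - 1).choose (b - 1) = a.choose b * b := hid
      _ ≤ (k.choose t * (k * (a - 1).choose (b - 1))) * b := Nat.mul_le_mul_right _ htotal
      _ = b * (k.choose t * k) * (a - 1).choose (b - 1) := by ring
  have hfinal : a ≤ b * (k.choose t * k) := Nat.le_of_mul_le_mul_right hmul hpos
  have hauxA : k * k.choose t ≤ (k ^ 2).choose (t + 1) := aux_choose_ineq k t ht htk
  have : a ≤ b * (k ^ 2).choose (t + 1) := by
    calc a ≤ b * (k.choose t * k) := hfinal
      _ = b * (k * k.choose t) := by ring
      _ ≤ b * (k ^ 2).choose (t + 1) := Nat.mul_le_mul_left _ hauxA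
  omega
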